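/- arXiv:1911.05606 — 3 statements merged into one kernel-verified Lean document; each statement's English description precedes it below -/
import Mathlib

section
/- Let X_1,...,X_m be jointly distributed random variables each with mean \mu and variance \sigma^2. Then the k-th order statistic satisfies E[X_{k:m}] \geq \mu - \sigma \sqrt{(m-k)/k}. -/
open MeasureTheory

/-- The `k`-th order statistic (the `k`-th smallest value) of the finite family `x`. -/
noncomputable def orderStat {m : ℕ} (x : Fin m → ℝ) (k : ℕ) : ℝ :=
  (Multiset.sort (Multiset.ofList (List.ofFn x)) (· ≤ ·)).getD (k - 1) 0

lemma le_orderStat_last {m : ℕ} (x : Fin m → ℝ) (i : Fin m) :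
    x i ≤ orderStat x m := by
  set l := Multiset.sort (Multiset.ofList (List.ofFn x)) (· ≤ ·) with hl
  have hlen : l.length = m := by
    rw [hl, Multiset.length_sort]; simp
  have hperm : l.Perm (List.ofFn x) := Multiset.coe_eq_coe.mp (Multiset.sort_eq _ _)
  have hmem : x i ∈ l := hperm.mem_iff.mpr (List.mem_ofFn.mpr ⟨i, rfl⟩)
  obtain ⟨j, hj, hje⟩ := List.getElem_of_mem hmem
  have hm : 0 < m := i.pos
  have h1 : m - 1 < l.length := by omega
  have : l[j] ≤ l[m-1] := by
    have := (show l.Pairwise (· ≤ ·) from Multiset.pairwise_sort _ _).rel_get_of_le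
      (a := ⟨j, hj⟩) (b := ⟨m-1, h1⟩) (by simp [Fin.le_def]; omega)
    simpa using this
  rw [orderStat, ← hl, List.getD_eq_getElem l 0 h1]
  rw [← hje]; exact this

lemma orderStat_pointwise {m : ℕ} (x : Fin m → ℝ) (k : ℕ) (hk1 : 1 ≤ k) (hkm : k ≤ m) (t : ℝ) :
    (k : ℝ) * max (t - orderStat x k) 0 ≤ ∑ i, max (t - x i) 0 := by
  set g : ℝ → ℝ := fun a => max (t - a) 0 with hg
  set l := Multiset.sort (Multiset.ofList (List.ofFn x)) (· ≤ ·) with hl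
  have hlen : l.length = m := by rw [hl, Multiset.length_sort]; simp
  have hperm : l.Perm (List.ofFn x) := Multiset.coe_eq_coe.mp (Multiset.sort_eq _ _)
  have hsum : ∑ i, g (x i) = (l.map g).sum := by
    rw [← List.sum_ofFn]
    rw [show (List.ofFn fun i => g (x i)) = (List.ofFn x).map g from (List.map_ofFn (f := x) (g := g)).symm,
      (hperm.map g).sum_eq]
  have hk1' : k - 1 < l.length := by omega
  have hOS : orderStat x k = l[k-1] := by
    rw [orderStat, ← hl, List.getD_eq_getElem l 0 hk1']
  have htake : (k : ℝ) * g (orderStat x k) ≤ ((l.map g).take k).sum := by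
    have hlt : ((l.map g).take k).length = k := by simp; omega
    have hb : ∀ y ∈ (l.map g).take k, g (orderStat x k) ≤ y := by
      intro y hy
      rw [← List.map_take] at hy
      obtain ⟨a, ha, rfl⟩ := List.mem_map.mp hy
      obtain ⟨j, hj, rfl⟩ := List.getElem_of_mem ha
      have hjk : j < k := by have := hj; simp at this; omega
      have hjl : j < l.length := by omega
      rw [List.getElem_take]
      have hle : l[j] ≤ l[k-1] := by
        have := (show l.Pairwise (· ≤ ·) from Multiset.pairwise_sort _ _).rel_get_of_le
          (a := ⟨j, hjl⟩) (b := ⟨k-1, hk1'⟩) (by simp [Fin.le_def]; omega)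
        simpa using this
      rw [hOS, hg]
      exact max_le_max (by linarith) le_rfl
    have := List.card_nsmul_le_sum ((l.map g).take k) (g (orderStat x k)) hb
    rw [hlt] at this
    simpa [nsmul_eq_mul] using this
  have hdrop : 0 ≤ ((l.map g).drop k).sum := by
    apply List.sum_nonneg
    intro y hy
    obtain ⟨a, ha, rfl⟩ := List.mem_map.mp (List.mem_of_mem_drop hy)
    exact le_max_right _ _
  calc (k : ℝ) * g (orderStat x k) ≤ ((l.map g).take k).sum := htake
    _ ≤ ((l.map g).take k).sum + ((l.map g).drop k).sum := by linarith
    _ = (l.map g).sum := List.sum_take_add_sum_drop _ _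
    _ = ∑ i, g (x i) := hsum.symm

lemma sq_integral_abs_le {Ω : Type*} [MeasurableSpace Ω] (μ : Measure Ω) [IsProbabilityMeasure μ]
    (Z : Ω → ℝ) (hZ : Integrable Z μ) (hZ2 : Integrable (fun ω => Z ω ^ 2) μ) :
    (∫ ω, |Z ω| ∂μ) ^ 2 ≤ ∫ ω, Z ω ^ 2 ∂μ := by
  set a := ∫ ω, |Z ω| ∂μ with ha
  have habs : Integrable (fun ω => |Z ω|) μ := hZ.abs
  have h0 : 0 ≤ ∫ ω, (|Z ω| - a) ^ 2 ∂μ := integral_nonneg fun ω => sq_nonneg _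
  have hiA : Integrable (fun ω => Z ω ^ 2 - 2 * a * |Z ω|) μ := by
    exact hZ2.sub (habs.const_mul (2*a))
  have hexp : ∫ ω, (|Z ω| - a) ^ 2 ∂μ = (∫ ω, Z ω ^ 2 ∂μ) - 2 * a * a + a ^ 2 := by
    have h1 : (fun ω => (|Z ω| - a) ^ 2) = fun ω => (Z ω ^ 2 - 2 * a * |Z ω|) + a ^ 2 := by
      funext ω; rw [sub_sq, sq_abs]; ring
    rw [h1, integral_add hiA (integrable_const _),
      integral_sub hZ2 (habs.const_mul (2*a)), integral_const_mul, integral_const]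
    simp only [integral_const, measure_univ, ENNReal.toReal_one, probReal_univ, smul_eq_mul, one_mul, ← ha]
  nlinarith [h0, hexp]

lemma pos_part_exp_le {Ω : Type*} [MeasurableSpace Ω] (μ : Measure Ω) [IsProbabilityMeasure μ]
    (Y : Ω → ℝ) (μ₀ σ t : ℝ)
    (hint : Integrable Y μ) (hint2 : Integrable (fun ω => Y ω ^ 2) μ)
    (hmean : ∫ ω, Y ω ∂μ = μ₀) (hvar : ∫ ω, (Y ω - μ₀) ^ 2 ∂μ = σ ^ 2) :
    ∫ ω, max (t - Y ω) 0 ∂μ ≤ ((t - μ₀) + Real.sqrt (σ ^ 2 + (t - μ₀) ^ 2)) / 2 := by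
  have hZ : Integrable (fun ω => t - Y ω) μ := (integrable_const t).sub hint
  have hZ2 : Integrable (fun ω => (t - Y ω) ^ 2) μ := by
    have : (fun ω => (t - Y ω) ^ 2) = fun ω => t ^ 2 - 2 * t * Y ω + Y ω ^ 2 := by
      funext ω; ring
    rw [this]
    exact ((integrable_const _).sub (hint.const_mul _)).add hint2
  have hsq : ∫ ω, (t - Y ω) ^ 2 ∂μ = σ ^ 2 + (t - μ₀) ^ 2 := by
    have hi1 : Integrable (fun ω => (Y ω - μ₀) ^ 2) μ := by
      have : (fun ω => (Y ω - μ₀) ^ 2) = fun ω => Y ω ^ 2 - 2 * μ₀ * Y ω + μ₀ ^ 2 := by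
        funext ω; ring
      rw [this]; exact ((hint2.sub (hint.const_mul _))).add (integrable_const _)
    have hi2 : Integrable (fun ω => 2 * (t - μ₀) * (Y ω - μ₀)) μ := by
      exact (hint.sub (integrable_const _)).const_mul _
    have hiA : Integrable (fun ω => (Y ω - μ₀) ^ 2 - 2 * (t - μ₀) * (Y ω - μ₀)) μ := hi1.sub hi2
    have h1 : (fun ω => (t - Y ω) ^ 2)
        = fun ω => ((Y ω - μ₀) ^ 2 - 2 * (t - μ₀) * (Y ω - μ₀)) + (t - μ₀) ^ 2 := by
      funext ω; ring
    have h2 : ∫ ω, 2 * (t - μ₀) * (Y ω - μ₀) ∂μ = 0 := by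
      rw [integral_const_mul, integral_sub hint (integrable_const _), hmean, integral_const]
      simp
    rw [h1, integral_add hiA (integrable_const _), integral_sub hi1 hi2, hvar, h2, integral_const]
    simp
  have habs : ∫ ω, |t - Y ω| ∂μ ≤ Real.sqrt (σ ^ 2 + (t - μ₀) ^ 2) := by
    have h := sq_integral_abs_le μ _ hZ hZ2
    rw [hsq] at h
    have hn : 0 ≤ ∫ ω, |t - Y ω| ∂μ := integral_nonneg fun ω => abs_nonneg _
    nlinarith [Real.sq_sqrt (by positivity : (0:ℝ) ≤ σ ^ 2 + (t - μ₀) ^ 2),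
      Real.sqrt_nonneg (σ ^ 2 + (t - μ₀) ^ 2)]
  have hmaxeq : ∫ ω, max (t - Y ω) 0 ∂μ = ((∫ ω, (t - Y ω) ∂μ) + ∫ ω, |t - Y ω| ∂μ) / 2 := by
    have h1 : (fun ω => max (t - Y ω) 0) = fun ω => ((t - Y ω) + |t - Y ω|) / 2 := by
      funext ω; rcases le_or_gt (t - Y ω) 0 with h | h
      · simp [max_eq_right h, abs_of_nonpos h]
      · rw [abs_of_pos h, max_eq_left h.le]; ring
    rw [h1, integral_div, integral_add hZ hZ.abs]
  rw [hmaxeq]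
  have hI : ∫ ω, (t - Y ω) ∂μ = t - μ₀ := by
    rw [integral_sub (integrable_const _) hint, hmean, integral_const]; simp
  rw [hI]
  linarith

lemma key_bound {Ω : Type*} [MeasurableSpace Ω]
    (μ : Measure Ω) [IsProbabilityMeasure μ]
    (m : ℕ) (X : Fin m → Ω → ℝ) (μ₀ σ : ℝ)
    (k : ℕ) (hk1 : 1 ≤ k) (hkm : k ≤ m)
    (hint : ∀ i, Integrable (X i) μ)
    (hint2 : ∀ i, Integrable (fun ω => (X i ω) ^ 2) μ)
    (hmean : ∀ i, ∫ ω, X i ω ∂μ = μ₀)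
    (hvar : ∀ i, ∫ ω, (X i ω - μ₀) ^ 2 ∂μ = σ ^ 2)
    (hintOS : Integrable (fun ω => orderStat (fun i => X i ω) k) μ) (t : ℝ) :
    t - ((m : ℝ) / k) * ((t - μ₀) + Real.sqrt (σ ^ 2 + (t - μ₀) ^ 2)) / 2
      ≤ ∫ ω, orderStat (fun i => X i ω) k ∂μ := by
  set OS : Ω → ℝ := fun ω => orderStat (fun i => X i ω) k with hOS
  have hkpos : (0:ℝ) < k := by exact_mod_cast hk1
  have hintMax : Integrable (fun ω => max (t - OS ω) 0) μ :=
    ((integrable_const t).sub hintOS).pos_part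
  have hintI : ∀ i : Fin m, Integrable (fun ω => max (t - X i ω) 0) μ := fun i =>
    ((integrable_const t).sub (hint i)).pos_part
  have hintSum : Integrable (fun ω => ∑ i, max (t - X i ω) 0) μ :=
    integrable_finset_sum _ (fun i _ => hintI i)
  have step1 : t ≤ (∫ ω, OS ω ∂μ) + ∫ ω, max (t - OS ω) 0 ∂μ := by
    rw [← integral_add hintOS hintMax]
    calc t = ∫ _ω, t ∂μ := by simp
    _ ≤ ∫ ω, OS ω + max (t - OS ω) 0 ∂μ := by
        apply integral_mono (integrable_const t) (hintOS.add hintMax)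
        intro ω
        show t ≤ OS ω + max (t - OS ω) 0
        rcases le_or_gt (t - OS ω) 0 with h | h
        · rw [max_eq_right h]; linarith
        · rw [max_eq_left h.le]; linarith
  have step2 : (k : ℝ) * ∫ ω, max (t - OS ω) 0 ∂μ ≤ ∑ i, ∫ ω, max (t - X i ω) 0 ∂μ := by
    rw [← integral_const_mul, ← integral_finset_sum _ (fun i _ => hintI i)]
    apply integral_mono (hintMax.const_mul _) hintSum
    intro ω
    exact orderStat_pointwise (fun i => X i ω) k hk1 hkm t
  have step3 : ∑ i, ∫ ω, max (t - X i ω) 0 ∂μ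
      ≤ (m : ℝ) * (((t - μ₀) + Real.sqrt (σ ^ 2 + (t - μ₀) ^ 2)) / 2) := by
    calc ∑ i, ∫ ω, max (t - X i ω) 0 ∂μ
        ≤ ∑ _i : Fin m, ((t - μ₀) + Real.sqrt (σ ^ 2 + (t - μ₀) ^ 2)) / 2 :=
          Finset.sum_le_sum fun i _ =>
            pos_part_exp_le μ (X i) μ₀ σ t (hint i) (hint2 i) (hmean i) (hvar i)
      _ = (m : ℝ) * (((t - μ₀) + Real.sqrt (σ ^ 2 + (t - μ₀) ^ 2)) / 2) := by
          simp [Finset.sum_const, mul_comm]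
  have hmax_le : ∫ ω, max (t - OS ω) 0 ∂μ
      ≤ ((m : ℝ) / k) * ((t - μ₀) + Real.sqrt (σ ^ 2 + (t - μ₀) ^ 2)) / 2 := by
    rw [div_mul_eq_mul_div, div_div, mul_comm (k:ℝ) 2, ← div_div, le_div_iff₀ hkpos, mul_comm]
    calc (k:ℝ) * ∫ ω, max (t - OS ω) 0 ∂μ ≤ ∑ i, ∫ ω, max (t - X i ω) 0 ∂μ := step2
      _ ≤ (m : ℝ) * (((t - μ₀) + Real.sqrt (σ ^ 2 + (t - μ₀) ^ 2)) / 2) := step3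
      _ = (m : ℝ) * ((t - μ₀) + Real.sqrt (σ ^ 2 + (t - μ₀) ^ 2)) / 2 := by ring
  linarith

/-- Lower bound on the expectation of the `k`-th order statistic of `m` jointly
distributed random variables with common mean `μ₀` and common variance `σ²`:
`E[X_{k:m}] ≥ μ₀ - σ √((m-k)/k)`. -/
theorem orderStat_expectation_lower_bound {Ω : Type*} [MeasurableSpace Ω]
    (μ : Measure Ω) [IsProbabilityMeasure μ]
    (m : ℕ) (X : Fin m → Ω → ℝ) (μ₀ σ : ℝ) (hσ : 0 ≤ σ)
    (k : ℕ) (hk1 : 1 ≤ k) (hkm : k ≤ m)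
    (hmeas : ∀ i, Measurable (X i))
    (hint : ∀ i, Integrable (X i) μ)
    (hint2 : ∀ i, Integrable (fun ω => (X i ω) ^ 2) μ)
    (hmean : ∀ i, ∫ ω, X i ω ∂μ = μ₀)
    (hvar : ∀ i, ∫ ω, (X i ω - μ₀) ^ 2 ∂μ = σ ^ 2)
    (hintOS : Integrable (fun ω => orderStat (fun i => X i ω) k) μ) :
    μ₀ - σ * Real.sqrt (((m : ℝ) - k) / k) ≤ ∫ ω, orderStat (fun i => X i ω) k ∂μ := by
  rcases eq_or_lt_of_le hkm with rfl | hkm'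
  · -- k = m : the order statistic is the maximum
    have hm : 0 < k := hk1
    have i0 : Fin k := ⟨0, hm⟩
    have hpt : ∀ ω, X i0 ω ≤ orderStat (fun i => X i ω) k := fun ω =>
      le_orderStat_last (fun i => X i ω) i0
    have := integral_mono (hint i0) hintOS hpt
    rw [hmean i0] at this
    have hz : Real.sqrt (((k : ℝ) - k) / k) = 0 := by simp
    rw [hz]
    linarith
  · -- k < m
    have hkpos : (0:ℝ) < k := by exact_mod_cast hk1
    have hmk : (0:ℝ) < (m:ℝ) - k := by
      have : (k:ℝ) < m := by exact_mod_cast hkm'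
      linarith
    set a : ℝ := Real.sqrt ((k:ℝ) * ((m:ℝ) - k)) with hadef
    have ha2 : a ^ 2 = (k:ℝ) * ((m:ℝ) - k) := Real.sq_sqrt (by positivity)
    have hapos : 0 < a := Real.sqrt_pos.mpr (by positivity)
    set t : ℝ := μ₀ + σ * (2 * (k:ℝ) - m) / (2 * a) with htdef
    have htu : t - μ₀ = σ * (2 * (k:ℝ) - m) / (2 * a) := by rw [htdef]; ring
    have hsqrt : Real.sqrt (σ ^ 2 + (t - μ₀) ^ 2) = σ * m / (2 * a) := by
      have heq : σ ^ 2 + (t - μ₀) ^ 2 = (σ * m / (2 * a)) ^ 2 := by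
        rw [htu]
        field_simp
        nlinarith [ha2]
      rw [heq, Real.sqrt_sq (by positivity)]
    have h := key_bound μ m X μ₀ σ k hk1 hkm hint hint2 hmean hvar hintOS t
    rw [hsqrt, htu] at h
    have hfinal : (μ₀ + σ * (2 * (k:ℝ) - m) / (2 * a))
        - ((m : ℝ) / k) * ((σ * (2 * (k:ℝ) - m) / (2 * a)) + σ * m / (2 * a)) / 2
        = μ₀ - σ * (((m:ℝ) - k) / a) := by
      field_simp
      ring
    rw [htdef] at h
    rw [hfinal] at h
    have hlast : Real.sqrt (((m : ℝ) - k) / k) = ((m:ℝ) - k) / a := by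
      have : ((m : ℝ) - k) / k = (((m:ℝ) - k) / a) ^ 2 := by
        rw [div_pow, ha2]
        field_simp
      rw [this, Real.sqrt_sq (by positivity)]
    rw [hlast]
    linarith
end

section
/- Let \hat{G} \in G(G,p) with Laplacian L, and let \ell be uniform over the n-1 nontrivial eigenvalues of L (conditionally on \hat{G}). Then Var(\ell) = p/(n-1)^2 * [ (n-1)(2m(2-p) + p \sum_{i=1}^n d_i^2) - 4m^2 p ]. -/
open MeasureTheory ProbabilityTheory Finset SimpleGraph
attribute [local instance] Classical.propDecidable

/-- The eigenvalues of a real symmetric matrix, sorted in increasing order. -/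
noncomputable def sortedEigs {n : ℕ} (A : Matrix (Fin n) (Fin n) ℝ) : List ℝ :=
  if hA : A.IsHermitian then
    Multiset.sort (Multiset.ofList (List.ofFn hA.eigenvalues)) (· ≤ ·)
  else []

/-- `eig A i` is the `i`-th smallest eigenvalue `λ_i(A)` (1-indexed). -/
noncomputable def eig {n : ℕ} (A : Matrix (Fin n) (Fin n) ℝ) (i : ℕ) : ℝ :=
  (sortedEigs A).getD (i - 1) 0

lemma sortedEigs_coe {n : ℕ} {A : Matrix (Fin n) (Fin n) ℝ} (hA : A.IsHermitian) :
    (↑(sortedEigs A) : Multiset ℝ) = ↑(List.ofFn hA.eigenvalues) := by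
  rw [sortedEigs, dif_pos hA, Multiset.sort_eq]

lemma sortedEigs_length {n : ℕ} {A : Matrix (Fin n) (Fin n) ℝ} (hA : A.IsHermitian) :
    (sortedEigs A).length = n := by
  have := congrArg Multiset.card (sortedEigs_coe hA)
  simpa using this

lemma sortedEigs_sorted {n : ℕ} {A : Matrix (Fin n) (Fin n) ℝ} (hA : A.IsHermitian) :
    (sortedEigs A).Pairwise (· ≤ ·) := by
  rw [sortedEigs, dif_pos hA]; exact Multiset.pairwise_sort _ _

lemma sortedEigs_map_sum {n : ℕ} {A : Matrix (Fin n) (Fin n) ℝ} (hA : A.IsHermitian)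
    (f : ℝ → ℝ) : ((sortedEigs A).map f).sum = ∑ i, f (hA.eigenvalues i) := by
  have h : (Multiset.map f ↑(sortedEigs A)).sum
      = (Multiset.map f ↑(List.ofFn hA.eigenvalues)).sum := by
    rw [sortedEigs_coe hA]
  simpa [List.sum_ofFn] using h

lemma trace_eq_sum_eigenvalues {n : ℕ} {A : Matrix (Fin n) (Fin n) ℝ} (hA : A.IsHermitian) :
    A.trace = ∑ i, hA.eigenvalues i := by
  conv_lhs => rw [hA.spectral_theorem]
  rw [Unitary.conjStarAlgAut_apply, Matrix.trace_mul_cycle, Matrix.mem_unitaryGroup_iff'.mp hA.eigenvectorUnitary.2,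
    Matrix.one_mul, Matrix.trace_diagonal]
  simp

lemma trace_sq_eq_sum_eigenvalues_sq {n : ℕ} {A : Matrix (Fin n) (Fin n) ℝ}
    (hA : A.IsHermitian) : (A * A).trace = ∑ i, hA.eigenvalues i ^ 2 := by
  set U : Matrix (Fin n) (Fin n) ℝ := (hA.eigenvectorUnitary : Matrix (Fin n) (Fin n) ℝ)
  set D : Matrix (Fin n) (Fin n) ℝ := Matrix.diagonal (RCLike.ofReal ∘ hA.eigenvalues)
  have hU : star U * U = 1 := Matrix.mem_unitaryGroup_iff'.mp hA.eigenvectorUnitary.2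
  have h1 : A * A = U * (D * D) * star U := by
    conv_lhs => rw [hA.spectral_theorem]
    calc U * D * star U * (U * D * star U) = U * (D * ((star U * U) * (D * star U))) := by
          simp only [Matrix.mul_assoc]
      _ = U * (D * D) * star U := by rw [hU]; simp only [Matrix.one_mul, Matrix.mul_assoc]
  rw [h1, Matrix.trace_mul_cycle, hU, Matrix.one_mul]
  simp [D, Matrix.diagonal_mul_diagonal, pow_two, Matrix.trace_diagonal]

lemma sum_Icc_getD {n : ℕ} (hn : 2 ≤ n) (l : List ℝ) (hl : l.length = n) (f : ℝ → ℝ) :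
    ∑ i ∈ Finset.Icc 2 n, f (l.getD (i-1) 0) = (l.map f).sum - f (l.getD 0 0) := by
  have h1 : ∀ t : List ℝ, (t.map f).sum = ∑ j ∈ Finset.range t.length, f (t.getD j 0) := by
    intro t
    induction t with
    | nil => simp
    | cons a t ih =>
        rw [List.length_cons, Finset.sum_range_succ']
        simp [ih]; ring
  have h2 : ∑ i ∈ Finset.Icc 2 n, f (l.getD (i-1) 0) = ∑ j ∈ Finset.Icc 1 (n-1), f (l.getD j 0) := by
    apply Finset.sum_nbij' (fun i => i - 1) (fun j => j + 1) <;> intro a ha <;>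
      simp [Finset.mem_Icc] at * <;> omega
  have h3 : Finset.range n = insert 0 (Finset.Icc 1 (n-1)) := by
    ext j; simp [Finset.mem_Icc, Finset.mem_range]; omega
  rw [h2, h1, hl, h3, Finset.sum_insert (by simp)]
  ring

lemma sortedEigs_head_lap {n : ℕ} (hn : 2 ≤ n) (K : SimpleGraph (Fin n)) :
    (sortedEigs (K.lapMatrix ℝ)).getD 0 0 = 0 := by
  have hP : (K.lapMatrix ℝ).PosSemidef := posSemidef_lapMatrix ℝ K
  have hA : (K.lapMatrix ℝ).IsHermitian := hP.1
  have hmem : ∀ x ∈ sortedEigs (K.lapMatrix ℝ), ∃ i, hA.eigenvalues i = x := by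
    intro x hx
    have : x ∈ (↑(List.ofFn hA.eigenvalues) : Multiset ℝ) := by
      rw [← sortedEigs_coe hA]; exact hx
    simpa [List.mem_ofFn, Eq.comm] using this
  have hnonneg : ∀ x ∈ sortedEigs (K.lapMatrix ℝ), 0 ≤ x := by
    intro x hx
    obtain ⟨i, hi⟩ := hmem x hx
    rw [← hi]; exact hP.eigenvalues_nonneg i
  have hzero : (0:ℝ) ∈ sortedEigs (K.lapMatrix ℝ) := by
    have hdet : (K.lapMatrix ℝ).det = 0 := by
      rw [← Matrix.exists_mulVec_eq_zero_iff]
      refine ⟨fun _ => 1, ?_, K.lapMatrix_mulVec_const_eq_zero⟩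
      intro h
      have := congrFun h ⟨0, by omega⟩
      simp at this
    have hprod : ∏ i, hA.eigenvalues i = 0 := by
      have := hA.det_eq_prod_eigenvalues
      rw [hdet] at this
      exact_mod_cast this.symm
    obtain ⟨i, _, hi⟩ := Finset.prod_eq_zero_iff.mp hprod
    have : hA.eigenvalues i ∈ (↑(List.ofFn hA.eigenvalues) : Multiset ℝ) := by
      simp [List.mem_ofFn]
    rw [← sortedEigs_coe hA] at this
    rw [← hi]; exact this
  have hsorted := sortedEigs_sorted hA
  rcases hL : sortedEigs (K.lapMatrix ℝ) with _ | ⟨a, t⟩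
  · simp
  · rw [hL] at hzero hsorted hnonneg
    simp only [List.getD_cons_zero]
    rcases List.mem_cons.mp hzero with h | h
    · exact h.symm
    · have h1 : a ≤ 0 := (List.pairwise_cons.mp hsorted).1 _ h
      have h2 : 0 ≤ a := hnonneg a (by simp)
      linarith

lemma lap_entry {n : ℕ} (K : SimpleGraph (Fin n)) (v u : Fin n) :
    K.lapMatrix ℝ v u = (if v = u then (K.degree v : ℝ) else 0) - (if K.Adj v u then 1 else 0) := by
  simp [lapMatrix, degMatrix, Matrix.diagonal, adjMatrix]

lemma trace_lap {n : ℕ} (K : SimpleGraph (Fin n)) :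
    (K.lapMatrix ℝ).trace = ∑ v, (K.degree v : ℝ) := by
  rw [Matrix.trace]
  apply Finset.sum_congr rfl
  intro v _
  rw [Matrix.diag_apply, lap_entry]
  simp [K.irrefl]

lemma trace_lap_sq {n : ℕ} (K : SimpleGraph (Fin n)) :
    ((K.lapMatrix ℝ) * (K.lapMatrix ℝ)).trace
      = ∑ v, (K.degree v : ℝ)^2 + ∑ v, (K.degree v : ℝ) := by
  have key : ∀ v u : Fin n, K.lapMatrix ℝ v u * K.lapMatrix ℝ u v
      = (if v = u then (K.degree v : ℝ)^2 else 0) + (if K.Adj v u then 1 else 0) := by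
    intro v u
    rw [lap_entry, lap_entry]
    by_cases h : v = u
    · subst h; simp [K.irrefl, pow_two]
    · have h' : ¬ u = v := fun hh => h hh.symm
      by_cases ha : K.Adj v u
      · simp [h, h', ha, K.adj_symm ha]
      · have ha' : ¬ K.Adj u v := fun hh => ha (K.adj_symm hh)
        simp [h, h', ha, ha']
  rw [Matrix.trace, ← Finset.sum_add_distrib]
  apply Finset.sum_congr rfl
  intro v _
  rw [Matrix.diag_apply, Matrix.mul_apply]
  rw [Finset.sum_congr rfl (fun u _ => key v u), Finset.sum_add_distrib]
  congr 1
  · simp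
  · rw [degree_eq_sum_if_adj]

lemma eig_sum_lap {n : ℕ} (hn : 2 ≤ n) (K : SimpleGraph (Fin n)) :
    ∑ i ∈ Finset.Icc 2 n, eig (K.lapMatrix ℝ) i = ∑ v, (K.degree v : ℝ) := by
  have hA : (K.lapMatrix ℝ).IsHermitian := (posSemidef_lapMatrix ℝ K).1
  have h := sum_Icc_getD hn _ (sortedEigs_length hA) id
  simp only [eig, id] at h ⊢
  rw [h, sortedEigs_head_lap hn K]
  have h2 := sortedEigs_map_sum hA id
  simp only [id] at h2
  rw [h2, ← trace_eq_sum_eigenvalues hA, trace_lap]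
  ring

lemma eig_sq_sum_lap {n : ℕ} (hn : 2 ≤ n) (K : SimpleGraph (Fin n)) :
    ∑ i ∈ Finset.Icc 2 n, (eig (K.lapMatrix ℝ) i)^2
      = ∑ v, (K.degree v : ℝ)^2 + ∑ v, (K.degree v : ℝ) := by
  have hA : (K.lapMatrix ℝ).IsHermitian := (posSemidef_lapMatrix ℝ K).1
  have h := sum_Icc_getD hn _ (sortedEigs_length hA) (fun x => x^2)
  simp only [eig] at h ⊢
  rw [h, sortedEigs_head_lap hn K]
  rw [sortedEigs_map_sum hA (fun x => x^2), ← trace_sq_eq_sum_eigenvalues_sq hA, trace_lap_sq]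
  ring

lemma integral_ite_mem {Ω : Type*} [Fintype Ω] [MeasurableSpace Ω] [MeasurableSingletonClass Ω]
    (μ : Measure Ω) (S : Set Ω) [∀ ω, Decidable (ω ∈ S)] :
    ∫ ω, (if ω ∈ S then (1:ℝ) else 0) ∂μ = (μ S).toReal := by
  rw [← measureReal_def, ← integral_indicator_one ((Set.toFinite S).measurableSet)]
  congr 1
  funext ω
  rw [Set.indicator_apply]
  simp

/-- If `ℓ` is, conditionally on the random subgraph `H ω` of `G`, uniform over the
`n-1` nontrivial eigenvalues of its Laplacian, then
`Var(ℓ) = E[ℓ²] - E[ℓ]² = p/(n-1)² ⬝ ((n-1)(2m(2-p) + p ∑ dᵢ²) - 4m²p)`. -/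
theorem variance_uniform_nontrivial_eigenvalue {Ω : Type*} [Fintype Ω] [MeasurableSpace Ω]
    [MeasurableSingletonClass Ω] (μ : Measure Ω) [IsProbabilityMeasure μ]
    {n : ℕ} (hn : 2 ≤ n) (G : SimpleGraph (Fin n)) (hG : G.Connected)
    (p : ℝ) (hp0 : 0 < p) (hp1 : p < 1)
    (H : Ω → SimpleGraph (Fin n)) (hsub : ∀ ω, H ω ≤ G)
    (hedge : ∀ e ∈ G.edgeSet, (μ {ω | e ∈ (H ω).edgeSet}).toReal = p)
    (hind : iIndepSet (fun e : G.edgeSet => {ω | (e : Sym2 (Fin n)) ∈ (H ω).edgeSet}) μ) :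
    (∫ ω, (((n : ℝ) - 1)⁻¹ * ∑ i ∈ Finset.Icc 2 n, (eig ((H ω).lapMatrix ℝ) i) ^ 2) ∂μ)
      - (∫ ω, (((n : ℝ) - 1)⁻¹ * ∑ i ∈ Finset.Icc 2 n, eig ((H ω).lapMatrix ℝ) i) ∂μ) ^ 2
      = p / ((n : ℝ) - 1) ^ 2 *
        (((n : ℝ) - 1) * (2 * (G.edgeFinset.card : ℝ) * (2 - p)
            + p * ∑ i, (G.degree i : ℝ) ^ 2)
          - 4 * (G.edgeFinset.card : ℝ) ^ 2 * p) := by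
  have hint : ∀ f : Ω → ℝ, Integrable f μ := fun f => Integrable.of_finite
  set m : ℝ := (G.edgeFinset.card : ℝ) with hm
  set dG : Fin n → ℝ := fun v => (G.degree v : ℝ) with hdG
  set a : Fin n → Fin n → Ω → ℝ := fun v u ω => if (H ω).Adj v u then 1 else 0 with ha
  have hadj : ∀ (v u : Fin n) (ω : Ω), (H ω).Adj v u → G.Adj v u := fun v u ω h => hsub ω h
  -- first moments
  have hE1 : ∀ v u : Fin n, G.Adj v u → ∫ ω, a v u ω ∂μ = p := by
    intro v u h
    have heq : ∀ ω, a v u ω = if ω ∈ {ω | s(v,u) ∈ (H ω).edgeSet} then (1:ℝ) else 0 := by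
      intro ω; simp [ha, Set.mem_setOf_eq, SimpleGraph.mem_edgeSet]
    simp only [heq]
    rw [integral_ite_mem]
    exact hedge _ (G.mem_edgeSet.mpr h)
  have hE0 : ∀ v u : Fin n, ¬ G.Adj v u → ∀ ω, a v u ω = 0 := by
    intro v u h ω
    simp only [ha]
    rw [if_neg]
    intro hadj'
    exact h (hadj v u ω hadj')
  have hE1' : ∀ v u : Fin n, ∫ ω, a v u ω ∂μ = if G.Adj v u then p else 0 := by
    intro v u
    by_cases h : G.Adj v u
    · rw [hE1 v u h, if_pos h]
    · simp only [hE0 v u h, if_neg h, integral_zero]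
  -- pairwise independence
  have hpair : ∀ e f : Sym2 (Fin n), e ∈ G.edgeSet → f ∈ G.edgeSet → e ≠ f →
      μ ({ω | e ∈ (H ω).edgeSet} ∩ {ω | f ∈ (H ω).edgeSet})
        = μ {ω | e ∈ (H ω).edgeSet} * μ {ω | f ∈ (H ω).edgeSet} := by
    intro e f he hf hef
    have hef' : (⟨e, he⟩ : G.edgeSet) ≠ ⟨f, hf⟩ := by simpa using hef
    have h := (iIndepSet_iff _ μ).mp hind {⟨e, he⟩, ⟨f, hf⟩}
      (f := fun i : G.edgeSet => {ω | (i : Sym2 (Fin n)) ∈ (H ω).edgeSet})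
      (fun i _ => MeasurableSpace.measurableSet_generateFrom (Set.mem_singleton _))
    simpa [Finset.set_biInter_insert, hef', Finset.prod_pair hef'] using h
  -- second moments
  have hE2 : ∀ v u w : Fin n, G.Adj v u → G.Adj v w → u ≠ w →
      ∫ ω, a v u ω * a v w ω ∂μ = p * p := by
    intro v u w h1 h2 huw
    have hne : s(v,u) ≠ s(v,w) := by
      intro hh
      rcases Sym2.eq_iff.mp hh with ⟨_, h⟩ | ⟨h1', h2'⟩
      · exact huw h
      · exact huw (h2'.trans h1')
    have heq : ∀ ω, a v u ω * a v w ω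
        = if ω ∈ {ω | s(v,u) ∈ (H ω).edgeSet} ∩ {ω | s(v,w) ∈ (H ω).edgeSet} then (1:ℝ) else 0 := by
      intro ω
      by_cases hu : (H ω).Adj v u <;> by_cases hw : (H ω).Adj v w <;>
        simp [ha, hu, hw, Set.mem_setOf_eq, SimpleGraph.mem_edgeSet]
    calc ∫ ω, a v u ω * a v w ω ∂μ
        = ∫ ω, (if ω ∈ ({ω | s(v,u) ∈ (H ω).edgeSet} ∩ {ω | s(v,w) ∈ (H ω).edgeSet}) then (1:ℝ) else 0) ∂μ := by
          simp only [heq]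
      _ = (μ ({ω | s(v,u) ∈ (H ω).edgeSet} ∩ {ω | s(v,w) ∈ (H ω).edgeSet})).toReal :=
          integral_ite_mem μ _
      _ = p * p := by
          rw [hpair _ _ (G.mem_edgeSet.mpr h1) (G.mem_edgeSet.mpr h2) hne, ENNReal.toReal_mul,
            hedge _ (G.mem_edgeSet.mpr h1), hedge _ (G.mem_edgeSet.mpr h2)]
  have hE2' : ∀ v u w : Fin n, ∫ ω, a v u ω * a v w ω ∂μ
      = (if u = w then (if G.Adj v u then p - p*p else 0) else 0)
        + (if G.Adj v u then p else 0) * (if G.Adj v w then p else 0) := by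
    intro v u w
    by_cases huw : u = w
    · subst huw
      have hsq : ∀ ω, a v u ω * a v u ω = a v u ω := by
        intro ω; simp only [ha]; by_cases h : (H ω).Adj v u <;> simp [h]
      simp only [hsq, hE1' v u, if_pos rfl]
      by_cases h : G.Adj v u <;> simp [h] <;> ring
    · by_cases h1 : G.Adj v u
      · by_cases h2 : G.Adj v w
        · rw [hE2 v u w h1 h2 huw]; simp [huw, h1, h2]
        · simp only [hE0 v w h2, mul_zero, integral_zero]
          simp [huw, h2]
      · simp only [hE0 v u h1, zero_mul, integral_zero]
        simp [huw, h1]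
  -- degrees of the random graph
  have hDeg : ∀ (ω : Ω) (v : Fin n), ((H ω).degree v : ℝ) = ∑ u, a v u ω := by
    intro ω v
    rw [degree_eq_sum_if_adj]
  have hsumdeg : ∑ v, dG v = 2 * m := by
    have := G.sum_degrees_eq_twice_card_edges
    simp only [hdG, hm]
    exact_mod_cast congrArg (Nat.cast : ℕ → ℝ) this
  have hdGsum : ∀ v : Fin n, ∑ u, (if G.Adj v u then (1:ℝ) else 0) = dG v := by
    intro v
    rw [hdG]
    exact (degree_eq_sum_if_adj G v).symm
  have hitep : ∀ (v : Fin n) (q : ℝ), ∑ u, (if G.Adj v u then q else 0) = q * dG v := by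
    intro v q
    rw [← hdGsum v, Finset.mul_sum]
    exact Finset.sum_congr rfl fun u _ => by by_cases h : G.Adj v u <;> simp [h]
  -- the two integrals
  have I1 : ∫ ω, (∑ v, ((H ω).degree v : ℝ)) ∂μ = p * (2 * m) := by
    simp only [hDeg]
    rw [integral_finset_sum _ (fun v _ => hint _)]
    rw [Finset.sum_congr rfl (fun v _ => integral_finset_sum _ (fun u _ => hint _))]
    rw [Finset.sum_congr rfl (fun v _ => Finset.sum_congr rfl (fun u _ => hE1' v u))]
    rw [Finset.sum_congr rfl (fun v _ => hitep v p), ← Finset.mul_sum, hsumdeg]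
  have I2 : ∫ ω, (∑ v, ((H ω).degree v : ℝ)^2) ∂μ
      = (p - p*p) * (2*m) + p^2 * ∑ v, dG v ^ 2 := by
    have hexp : ∀ (ω : Ω) (v : Fin n), ((H ω).degree v : ℝ)^2 = ∑ u, ∑ w, a v u ω * a v w ω := by
      intro ω v
      rw [hDeg, pow_two, Finset.sum_mul_sum]
    simp only [hexp]
    rw [integral_finset_sum _ (fun v _ => hint _)]
    rw [Finset.sum_congr rfl (fun v _ => integral_finset_sum _ (fun u _ => hint _))]
    rw [Finset.sum_congr rfl (fun v _ => Finset.sum_congr rfl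
      (fun u _ => integral_finset_sum _ (fun w _ => hint _)))]
    rw [Finset.sum_congr rfl (fun v _ => Finset.sum_congr rfl (fun u _ =>
      Finset.sum_congr rfl (fun w _ => hE2' v u w)))]
    have hper : ∀ v : Fin n, ∑ u, ∑ w : Fin n,
        ((if u = w then (if G.Adj v u then p - p*p else 0) else 0)
          + (if G.Adj v u then p else 0) * (if G.Adj v w then p else 0))
        = (p - p*p) * dG v + (p * dG v)^2 := by
      intro v
      have e1 : ∀ u : Fin n, ∑ w : Fin n, ((if u = w then (if G.Adj v u then p - p*p else 0) else 0)
          + (if G.Adj v u then p else 0) * (if G.Adj v w then p else 0))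
          = (if G.Adj v u then p - p*p else 0) + (if G.Adj v u then p else 0) * (p * dG v) := by
        intro u
        rw [Finset.sum_add_distrib, Finset.sum_ite_eq, if_pos (Finset.mem_univ u),
          ← Finset.mul_sum, hitep v p]
      rw [Finset.sum_congr rfl (fun u _ => e1 u), Finset.sum_add_distrib, hitep v (p - p*p)]
      congr 1
      rw [← Finset.sum_mul, hitep v p]
      ring
    rw [Finset.sum_congr rfl (fun v _ => hper v), Finset.sum_add_distrib, ← Finset.mul_sum, hsumdeg]
    congr 1
    rw [Finset.sum_congr rfl (fun v (_ : v ∈ Finset.univ) => mul_pow p (dG v) 2), ← Finset.mul_sum]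
  -- final assembly
  have hc : ((n:ℝ) - 1) ≠ 0 := by
    have h2 : (2:ℝ) ≤ (n:ℝ) := by exact_mod_cast hn
    linarith
  have hL1 : (∫ ω, (((n:ℝ)-1)⁻¹ * ∑ i ∈ Finset.Icc 2 n, eig ((H ω).lapMatrix ℝ) i) ∂μ)
      = ((n:ℝ)-1)⁻¹ * (p * (2*m)) := by
    have heq : ∀ ω : Ω, (((n:ℝ)-1)⁻¹ * ∑ i ∈ Finset.Icc 2 n, eig ((H ω).lapMatrix ℝ) i)
        = ((n:ℝ)-1)⁻¹ * ∑ v, ((H ω).degree v : ℝ) := by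
      intro ω; rw [eig_sum_lap hn (H ω)]
    simp only [heq]
    rw [MeasureTheory.integral_const_mul _ _, I1]
  have hL2 : (∫ ω, (((n:ℝ)-1)⁻¹ * ∑ i ∈ Finset.Icc 2 n, (eig ((H ω).lapMatrix ℝ) i) ^ 2) ∂μ)
      = ((n:ℝ)-1)⁻¹ * (((p - p*p) * (2*m) + p^2 * ∑ v, dG v ^ 2) + p * (2*m)) := by
    have heq : ∀ ω : Ω, (((n:ℝ)-1)⁻¹ * ∑ i ∈ Finset.Icc 2 n, (eig ((H ω).lapMatrix ℝ) i) ^ 2)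
        = ((n:ℝ)-1)⁻¹ * ((∑ v, ((H ω).degree v : ℝ)^2) + ∑ v, ((H ω).degree v : ℝ)) := by
      intro ω; rw [eig_sq_sum_lap hn (H ω)]
    simp only [heq]
    rw [MeasureTheory.integral_const_mul _ _, integral_add (hint _) (hint _), I1, I2]
  rw [hL2, hL1]
  simp only [hdG]
  field_simp
  ring
end

section
/- For a random graph \hat{G} \in G(K_n, p) (classical Erdős–Rényi) with Laplacian L, P(\lambda_2(L) > 0) \geq max_{N \in \mathbb{N}} [ max{0, \sqrt{n(n-1)p} R(N,n) - \sqrt{2(n-1)(1-p)(N-1)} } ]^2 / [ (n-1) R(N,n)^2 (2 - 2p + np) ]. -/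
open MeasureTheory ProbabilityTheory Finset SimpleGraph
attribute [local instance] Classical.propDecidable

lemma eig2_pos_of_connected {n : ℕ} (hn : 2 ≤ n) {G : SimpleGraph (Fin n)}
    (hG : G.Connected) : 0 < eig (G.lapMatrix ℝ) 2 := by
  classical
  have hps := SimpleGraph.posSemidef_lapMatrix ℝ G
  have hA : (G.lapMatrix ℝ).IsHermitian := hps.1
  -- number of connected components = 1
  have hcard : Fintype.card G.ConnectedComponent = 1 := by
    have : Subsingleton G.ConnectedComponent := by
      constructor
      intro a b
      refine SimpleGraph.ConnectedComponent.ind₂ (fun v w => ?_) a b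
      exact SimpleGraph.ConnectedComponent.eq.2 (hG.preconnected v w)
    have : Nonempty G.ConnectedComponent := ⟨G.connectedComponentMk ⟨0, by omega⟩⟩
    exact Fintype.card_eq_one_iff.2 ⟨Classical.arbitrary _, fun y => Subsingleton.elim _ _⟩
  -- kernel dimension
  have hker : Module.finrank ℝ (LinearMap.ker (Matrix.toLin' (G.lapMatrix ℝ))) = 1 := by
    rw [← SimpleGraph.card_connectedComponent_eq_finrank_ker_toLin'_lapMatrix, hcard]
  -- rank
  have htl : Matrix.toLin' (G.lapMatrix ℝ) = (G.lapMatrix ℝ).mulVecLin := by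
    ext x
    simp [Matrix.toLin'_apply, Matrix.mulVecLin]
  have hrank : (G.lapMatrix ℝ).rank = n - 1 := by
    have h2 := LinearMap.finrank_range_add_finrank_ker (Matrix.toLin' (G.lapMatrix ℝ))
    rw [hker] at h2
    have : Module.finrank ℝ (Fin n → ℝ) = n := by simp
    rw [this] at h2
    have : (G.lapMatrix ℝ).rank = Module.finrank ℝ (LinearMap.range (Matrix.toLin' (G.lapMatrix ℝ))) := by
      rw [htl]; rfl
    omega
  -- number of zero eigenvalues = 1
  have hnz : Fintype.card {i // hA.eigenvalues i ≠ 0} = n - 1 := by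
    rw [← hA.rank_eq_card_non_zero_eigs, hrank]
  have hzero : (Finset.univ.filter (fun i => (0:ℝ) = hA.eigenvalues i)).card = 1 := by
    have h1 : (Finset.univ.filter (fun i => hA.eigenvalues i ≠ 0)).card = n - 1 := by
      rw [← hnz, Fintype.card_subtype]
    have h2 := Finset.card_filter_add_card_filter_not
      (s := (Finset.univ : Finset (Fin n))) (p := fun i => hA.eigenvalues i ≠ 0)
    simp only [Finset.card_univ, Fintype.card_fin] at h2
    have h3 : (Finset.univ.filter (fun i => ¬ hA.eigenvalues i ≠ 0)).card
        = (Finset.univ.filter (fun i => (0:ℝ) = hA.eigenvalues i)).card := by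
      congr 1
      apply Finset.filter_congr
      intro i _
      simp [eq_comm]
    omega
  -- the sorted list
  have hsl : sortedEigs (G.lapMatrix ℝ)
      = Multiset.sort (Multiset.ofList (List.ofFn hA.eigenvalues)) (· ≤ ·) := by
    rw [sortedEigs, dif_pos hA]
  have heig : eig (G.lapMatrix ℝ) 2
      = (Multiset.sort (Multiset.ofList (List.ofFn hA.eigenvalues)) (· ≤ ·)).getD 1 0 := by
    rw [eig, hsl]
  obtain ⟨l, hl⟩ : ∃ l, Multiset.sort
      (Multiset.ofList (List.ofFn hA.eigenvalues)) (· ≤ ·) = l := ⟨_, rfl⟩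
  rw [hl] at heig
  have hlen : l.length = n := by
    rw [← hl, Multiset.length_sort]; simp
  have hsort : l.Pairwise (· ≤ ·) := by rw [← hl]; exact Multiset.pairwise_sort _ _
  have hmem : ∀ x ∈ l, 0 ≤ x := by
    intro x hx
    rw [← hl, Multiset.mem_sort, Multiset.mem_coe, List.mem_ofFn] at hx
    obtain ⟨i, rfl⟩ := hx
    exact hps.eigenvalues_nonneg i
  have hcount : l.count 0 = 1 := by
    have hme : (l : Multiset ℝ) = Multiset.ofList (List.ofFn hA.eigenvalues) := by
      rw [← hl]; exact Multiset.sort_eq _ _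
    have hc : l.count 0 = Multiset.count 0 (Multiset.ofList (List.ofFn hA.eigenvalues)) := by
      rw [← hme, Multiset.coe_count]
    rw [hc, ← Fin.univ_val_map, Multiset.count_map]
    exact hzero
  rw [heig]
  rcases l with _ | ⟨a, _ | ⟨b, t⟩⟩
  · simp at hlen; omega
  · simp at hlen; omega
  · show 0 < (a :: b :: t).getD 1 0
    have hb0 : 0 ≤ b := hmem b (by simp)
    have ha0 : 0 ≤ a := hmem a (by simp)
    rcases lt_or_ge 0 b with h | h
    · simpa using h
    · exfalso
      have hb : b = 0 := le_antisymm h hb0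
      have hab : a ≤ b := (List.pairwise_cons.1 hsort).1 b (by simp)
      have ha : a = 0 := le_antisymm (by rw [← hb]; exact hab) ha0
      rw [ha, hb] at hcount
      simp [List.count_cons] at hcount

lemma prob_lower {Ω : Type*} [Fintype Ω] [MeasurableSpace Ω]
    [MeasurableSingletonClass Ω] (μ : Measure Ω) [IsProbabilityMeasure μ]
    {n : ℕ} (hn : 3 ≤ n)
    (p : ℝ) (hp0 : 0 < p) (hp1 : p < 1)
    (H : Ω → SimpleGraph (Fin n))
    (hedge : ∀ e ∈ (⊤ : SimpleGraph (Fin n)).edgeSet,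
      (μ {ω | e ∈ (H ω).edgeSet}).toReal = p)
    (hind : iIndepSet
      (fun e : (⊤ : SimpleGraph (Fin n)).edgeSet =>
        {ω | (e : Sym2 (Fin n)) ∈ (H ω).edgeSet}) μ) :
    1 - (1 - p)/p ≤ (μ {ω | 0 < eig ((H ω).lapMatrix ℝ) 2}).toReal := by
  classical
  have : NeZero n := ⟨by omega⟩
  set q : ℝ := 1 - p with hq
  have hq0 : 0 ≤ q := by simp [hq]; linarith
  have hq1 : q < 1 := by simp [hq]; linarith
  have hmeas : ∀ S : Set Ω, MeasurableSet S := fun S => S.toFinite.measurableSet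
  set fam : (⊤ : SimpleGraph (Fin n)).edgeSet → Set Ω :=
    fun e => {ω | (e : Sym2 (Fin n)) ∈ (H ω).edgeSet} with hfam
  -- bad events
  set B : Fin n → Set Ω := fun v => ⋂ u ∈ Finset.Iio v, {ω | (H ω).Adj u v}ᶜ with hB
  -- measure of each bad event
  have hBmeas : ∀ v : Fin n, μ (B v) = ENNReal.ofReal (q ^ (v.val)) := by
    intro v
    -- index set of edges
    set g : {u // u ∈ Finset.Iio v} → (⊤ : SimpleGraph (Fin n)).edgeSet :=
      fun u => ⟨s(u.1, v), by
        rw [SimpleGraph.mem_edgeSet, SimpleGraph.top_adj]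
        exact ne_of_lt (Finset.mem_Iio.1 u.2)⟩ with hg
    have hginj : Function.Injective g := by
      intro a b hab
      rw [hg] at hab
      simp only [Subtype.mk_eq_mk] at hab
      exact Subtype.ext (Sym2.congr_left.1 hab)
    set T : Finset ((⊤ : SimpleGraph (Fin n)).edgeSet) :=
      (Finset.Iio v).attach.image g with hT
    have hTcard : T.card = v.val := by
      rw [hT, Finset.card_image_of_injective _ hginj, Finset.card_attach, Fin.card_Iio]
    have hBT : B v = ⋂ e ∈ T, (fam e)ᶜ := by
      ext ω
      constructor
      · intro hω
        apply Set.mem_iInter₂.2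
        intro e he
        rw [hT, Finset.mem_image] at he
        obtain ⟨u, _, rfl⟩ := he
        have h2 := Set.mem_iInter₂.1 hω u.1 u.2
        rw [Set.mem_compl_iff] at h2 ⊢
        intro hc
        exact h2 (((H ω).mem_edgeSet).1 hc)
      · intro hω
        apply Set.mem_iInter₂.2
        intro u hu
        have hm : g ⟨u, hu⟩ ∈ T := by
          rw [hT]; exact Finset.mem_image_of_mem g (Finset.mem_attach _ ⟨u, hu⟩)
        have h2 := Set.mem_iInter₂.1 hω (g ⟨u, hu⟩) hm
        rw [Set.mem_compl_iff] at h2 ⊢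
        intro hc
        exact h2 (((H ω).mem_edgeSet).2 hc)
    have hprod := (iIndepSet_iff fam μ).1 hind T
      (f := fun e => (fam e)ᶜ)
      (fun i _ => (MeasurableSpace.measurableSet_generateFrom (Set.mem_singleton _)).compl)
    rw [hBT, hprod]
    have hfac : ∀ e ∈ T, μ ((fam e)ᶜ) = ENNReal.ofReal q := by
      intro e _
      rw [prob_compl_eq_one_sub (hmeas _)]
      have h1 : μ (fam e) = ENNReal.ofReal p := by
        rw [← hedge e e.2, ENNReal.ofReal_toReal (measure_ne_top μ _)]
      rw [h1, hq]
      rw [ENNReal.ofReal_sub _ (le_of_lt hp0), ENNReal.ofReal_one]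
    rw [Finset.prod_congr rfl hfac, Finset.prod_const, hTcard, ← ENNReal.ofReal_pow hq0]
  -- connectivity off the union of bad events
  set U : Set Ω := ⋃ v ∈ (Finset.univ.erase (0 : Fin n)), B v with hU
  have hUc : Uᶜ ⊆ {ω | 0 < eig ((H ω).lapMatrix ℝ) 2} := by
    intro ω hω
    simp only [hU, Set.mem_compl_iff, Set.mem_iUnion] at hω
    push_neg at hω
    have hconn : (H ω).Connected := by
      have hreach : ∀ m : ℕ, ∀ v : Fin n, v.val ≤ m → (H ω).Reachable 0 v := by
        intro m
        induction m with
        | zero =>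
          intro v hv
          have : v = 0 := by
            apply Fin.ext; simpa using hv
          rw [this]
        | succ k ih =>
          intro v hv
          by_cases h0 : v = 0
          · rw [h0]
          · have hvB := hω v (Finset.mem_erase.2 ⟨h0, Finset.mem_univ v⟩)
            simp only [hB, Set.mem_iInter, Set.mem_compl_iff, Set.mem_setOf_eq, not_forall] at hvB
            push_neg at hvB
            obtain ⟨u, hu, hadj⟩ := hvB
            rw [Finset.mem_Iio] at hu
            have huk : u.val ≤ k := by
              have := Fin.lt_def.1 hu; omega
            exact (ih u huk).trans hadj.reachable
      rw [SimpleGraph.connected_iff]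
      refine ⟨fun a b => ?_, ⟨0⟩⟩
      exact ((hreach n a (le_of_lt a.isLt)).symm).trans (hreach n b (le_of_lt b.isLt))
    exact eig2_pos_of_connected (by omega) hconn
  -- union bound
  have hUb : μ U ≤ ENNReal.ofReal (q / p) := by
    calc μ U ≤ ∑ v ∈ Finset.univ.erase (0 : Fin n), μ (B v) :=
          measure_biUnion_finset_le _ _
    _ = ∑ v ∈ Finset.univ.erase (0 : Fin n), ENNReal.ofReal (q ^ (v.val)) := by
          exact Finset.sum_congr rfl (fun v _ => hBmeas v)
    _ = ENNReal.ofReal (∑ v ∈ Finset.univ.erase (0 : Fin n), q ^ (v.val)) :=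
          (ENNReal.ofReal_sum_of_nonneg (fun v _ => pow_nonneg hq0 _)).symm
    _ ≤ ENNReal.ofReal (q / p) := by
          apply ENNReal.ofReal_le_ofReal
          have hsum : ∑ v ∈ Finset.univ.erase (0 : Fin n), q ^ (v.val)
              = (∑ v : Fin n, q ^ (v.val)) - 1 := by
            rw [Finset.sum_erase_eq_sub (Finset.mem_univ _)]
            norm_num
          rw [hsum, Fin.sum_univ_eq_sum_range (fun i => q ^ i)]
          have hgeom : ∑ i ∈ Finset.range n, q ^ i ≤ 1 / p := by
            rw [geom_sum_eq (by linarith : q ≠ 1)]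
            have hrw : (q ^ n - 1) / (q - 1) = (1 - q ^ n) / p := by
              have h1 : q - 1 = -p := by rw [hq]; ring
              rw [h1, div_neg, ← neg_div]
              ring_nf
            rw [hrw]
            gcongr <;> nlinarith [pow_nonneg hq0 n]
          have : 1 / p - 1 = q / p := by field_simp; rw [hq]
          linarith
  -- finish
  have h1 : (μ U).toReal ≤ q / p :=
    ENNReal.toReal_le_of_le_ofReal (div_nonneg hq0 (le_of_lt hp0)) hUb
  have h2 : μ Uᶜ = 1 - μ U := prob_compl_eq_one_sub (hmeas _)
  have h3 : (μ Uᶜ).toReal = 1 - (μ U).toReal := by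
    rw [h2, ENNReal.toReal_sub_of_le prob_le_one ENNReal.one_ne_top, ENNReal.toReal_one]
  have h4 : μ Uᶜ ≤ μ {ω | 0 < eig ((H ω).lapMatrix ℝ) 2} := measure_mono hUc
  have h5 := ENNReal.toReal_le_toReal (measure_ne_top μ _) (measure_ne_top μ _) |>.2 h4
  linarith

set_option maxHeartbeats 1000000 in
lemma analytic_key (c p q R M A B D : ℝ) (hc : 3 ≤ c) (hp0 : 0 < p)
    (hq : q = 1 - p) (hq0 : 0 ≤ q)
    (hMpos : 1 ≤ M) (hR1 : R ≤ 1) (hRpos : 0 < R) (hRM : R * (c - 1) ≤ M)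
    (hA2 : A ^ 2 = c * (c - 1) * p * R ^ 2) (hB2 : B ^ 2 = 2 * (c - 1) * q * M)
    (hBnn : 0 ≤ B) (hAB : B < A)
    (hD : D = (c - 1) * R ^ 2 * (2 - 2 * p + c * p)) :
    (A - B) ^ 2 / D ≤ 1 - q / p := by
  have hApos : 0 < A := lt_of_le_of_lt hBnn hAB
  have hF3 : 2 * q * M < c * p * R ^ 2 := by
    have hsq : B ^ 2 < A ^ 2 := by nlinarith
    rw [hA2, hB2] at hsq
    nlinarith
  have hRM2 : R ^ 2 * (c - 1) ≤ M := by nlinarith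
  have hF4 : 2 * q ≤ c * p := by
    have h1 : 2 * q * (R ^ 2 * (c - 1)) ≤ 2 * q * M := by
      apply mul_le_mul_of_nonneg_left hRM2 (by linarith)
    have h2' : (2 * q * (c - 1)) * R ^ 2 < (c * p) * R ^ 2 := by nlinarith [h1, hF3]
    have h4 : 2 * q * (c - 1) < c * p := lt_of_mul_lt_mul_right h2' (sq_nonneg R)
    nlinarith [mul_nonneg hq0 (by linarith : (0:ℝ) ≤ c - 2)]
  have hkey1 : R ^ 2 * ((c - 2) * p + 2 * q) ≤ 2 * M * p := by
    have h2 : (c - 2) * p + 2 * q ≤ 2 * (c - 1) * p := by nlinarith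
    have h3 : 0 ≤ (c - 2) * p + 2 * q := by nlinarith
    nlinarith [sq_nonneg R]
  have hkey2 : A ^ 2 * q ≤ B ^ 2 * p + 2 * q * (c - 1) * R ^ 2 * (p - q) := by
    rw [hA2, hB2]
    nlinarith [mul_le_mul_of_nonneg_left hkey1
      (mul_nonneg hq0 (by linarith : (0:ℝ) ≤ c - 1))]
  have hDval : D = 2 * q * (c - 1) * R ^ 2 + A ^ 2 := by
    rw [hD, hA2, hq]; ring
  have hABm : B ^ 2 ≤ A * B := by nlinarith
  have hmain : (A - B) ^ 2 * p ≤ D * (p - q) := by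
    have h1 : (A - B) ^ 2 ≤ A ^ 2 - B ^ 2 := by nlinarith
    have h2 : (A ^ 2 - B ^ 2) * p ≤ D * (p - q) := by
      rw [hDval]
      nlinarith [hkey2]
    nlinarith
  have hDpos : 0 < D := by
    rw [hD]
    have h1 : 0 < 2 - 2 * p + c * p := by nlinarith
    have h2 : 0 < (c - 1) * R ^ 2 :=
      mul_pos (by linarith) (pow_pos hRpos 2)
    exact mul_pos h2 h1
  rw [div_le_iff₀ hDpos]
  have hrw : (1 - q / p) * D = D * (p - q) / p := by
    field_simp
  rw [hrw, le_div_iff₀ hp0]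
  linarith [hmain]

/-- Theorem 5.1: for a classical Erdős–Rényi random graph (random subgraph of the
complete graph `K_n`, each edge independently present with probability `p`) with
Laplacian `L` and `R(N,n) = 1 - ((n-2)/(n-1))^{N-1}`, for every `N ∈ ℕ`
(hence for the max over `N`),
`P(λ₂(L) > 0) ≥ (max{0, √(n(n-1)p) R(N,n) - √(2(n-1)(1-p)(N-1))})²
  / ((n-1)R(N,n)²(2 - 2p + np))`. -/
theorem prob_connected_lower_complete {Ω : Type*} [Fintype Ω] [MeasurableSpace Ω]
    [MeasurableSingletonClass Ω] (μ : Measure Ω) [IsProbabilityMeasure μ]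
    {n : ℕ} (hn : 3 ≤ n)
    (p : ℝ) (hp0 : 0 < p) (hp1 : p < 1)
    (H : Ω → SimpleGraph (Fin n))
    (hedge : ∀ e ∈ (⊤ : SimpleGraph (Fin n)).edgeSet,
      (μ {ω | e ∈ (H ω).edgeSet}).toReal = p)
    (hind : iIndepSet
      (fun e : (⊤ : SimpleGraph (Fin n)).edgeSet =>
        {ω | (e : Sym2 (Fin n)) ∈ (H ω).edgeSet}) μ) :
    ∀ N : ℕ, 1 ≤ N →
      (μ {ω | 0 < eig ((H ω).lapMatrix ℝ) 2}).toReal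
        ≥ (max 0 (Real.sqrt ((n : ℝ) * ((n : ℝ) - 1) * p)
              * (1 - (((n : ℝ) - 2) / ((n : ℝ) - 1)) ^ (N - 1))
            - Real.sqrt (2 * ((n : ℝ) - 1) * (1 - p) * ((N : ℝ) - 1)))) ^ 2
          / (((n : ℝ) - 1) * (1 - (((n : ℝ) - 2) / ((n : ℝ) - 1)) ^ (N - 1)) ^ 2 *
            (2 - 2 * p + (n : ℝ) * p)) := by
  intro N hN
  have hc : (3:ℝ) ≤ (n:ℝ) := by exact_mod_cast hn
  set c : ℝ := (n : ℝ) with hcdef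
  set R : ℝ := 1 - ((c - 2) / (c - 1)) ^ (N - 1) with hR
  set A : ℝ := Real.sqrt (c * (c - 1) * p) * R with hA
  set B : ℝ := Real.sqrt (2 * (c - 1) * (1 - p) * ((N : ℝ) - 1)) with hBdef
  set D : ℝ := (c - 1) * R ^ 2 * (2 - 2 * p + c * p) with hD
  rcases le_or_gt (A - B) 0 with h | h
  · rw [max_eq_left h]
    have : (0:ℝ) ^ 2 / D = 0 := by norm_num
    rw [this]
    exact ENNReal.toReal_nonneg
  · rw [max_eq_right (le_of_lt h)]
    set q : ℝ := 1 - p with hq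
    have hq0 : 0 ≤ q := by rw [hq]; linarith
    have hBnn : 0 ≤ B := Real.sqrt_nonneg _
    have hApos : 0 < A := by linarith
    have hN2 : 2 ≤ N := by
      by_contra hcon
      have hN1 : N = 1 := by omega
      have hR0 : R = 0 := by rw [hR, hN1]; norm_num
      have hA0 : A = 0 := by rw [hA, hR0, mul_zero]
      linarith
    -- basic facts
    have hx0 : (0:ℝ) ≤ (c - 2) / (c - 1) := div_nonneg (by linarith) (by linarith)
    have hx1 : (c - 2) / (c - 1) < 1 := by
      rw [div_lt_one (by linarith)]; linarith
    have hM1 : 1 ≤ N - 1 := by omega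
    have hMcast : ((N:ℝ) - 1) = ((N - 1 : ℕ) : ℝ) := by
      have : (1:ℕ) ≤ N := hN
      push_cast [Nat.cast_sub this]
      ring
    set M : ℝ := ((N - 1 : ℕ) : ℝ) with hMdef
    have hMpos : 1 ≤ M := by
      rw [hMdef]; exact_mod_cast hM1
    have hR1 : R ≤ 1 := by
      rw [hR]
      have := pow_nonneg hx0 (N - 1)
      linarith
    have hRpos : 0 < R := by
      rw [hR]
      have := pow_lt_one₀ hx0 hx1 (by omega : N - 1 ≠ 0)
      linarith
    have hRM : R * (c - 1) ≤ M := by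
      have hber := one_add_mul_le_pow
        (a := (c - 2) / (c - 1) - 1) (by linarith : (-2:ℝ) ≤ _) (N - 1)
      have hone : (1 : ℝ) + ((c - 2) / (c - 1) - 1) = (c - 2) / (c - 1) := by ring
      rw [hone] at hber
      have hfr : (c - 2) / (c - 1) - 1 = -(1 / (c - 1)) := by
        have hne : c - 1 ≠ 0 := by linarith
        field_simp
        ring
      rw [hfr, ← hMdef] at hber
      have hcm : (0:ℝ) < c - 1 := by linarith
      have hstep : R ≤ M * (1 / (c - 1)) := by
        rw [hR]
        linarith [hber]
      have hfin : M * (1 / (c - 1)) * (c - 1) = M := by field_simp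
      calc R * (c - 1) ≤ M * (1 / (c - 1)) * (c - 1) :=
            mul_le_mul_of_nonneg_right hstep (by linarith)
      _ = M := hfin
    have hA2 : A ^ 2 = c * (c - 1) * p * R ^ 2 := by
      rw [hA, mul_pow, Real.sq_sqrt (le_of_lt (mul_pos (mul_pos (by linarith : (0:ℝ) < c) (by linarith : (0:ℝ) < c - 1)) hp0))]
    have hB2 : B ^ 2 = 2 * (c - 1) * q * M := by
      rw [hBdef, hMcast, Real.sq_sqrt (mul_nonneg (mul_nonneg (mul_nonneg (by norm_num) (by linarith : (0:ℝ) ≤ c - 1)) hq0) (by linarith : (0:ℝ) ≤ M))]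
    have hfrac : (A - B) ^ 2 / D ≤ 1 - q / p := by
      refine analytic_key c p q R M A B D hc hp0 hq hq0 hMpos hR1 hRpos hRM hA2 hB2 hBnn (by linarith) hD
    have hprob := prob_lower μ hn p hp0 hp1 H hedge hind
    rw [← hq] at hprob
    linarith [hfrac, hprob]
end
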